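/- Let f_1, …, f_d ∈ K be nonzero, let P = {i : f_i > 0} and N = {i : f_i < 0}, with both P and N nonempty. If X ∈ K^d has all coordinates positive and Σ_i f_i X_i ≥ 0, then deg(X) lies in the union of the closed sectors indexed by P: that is, max_{i ∈ P} (deg(X_i) + deg(f_i)) = max_{i=1..d} (deg(X_i) + deg(f_i)). -/

import Mathlib

open scoped Classical

/-- The field of Hahn (generalized Puiseux) series over ℝ with real exponents. -/
abbrev K := HahnSeries ℝ ℝ

/-- The degree: the leading exponent (max-plus convention). -/
noncomputable def deg (x : K) : ℝ := -x.order

/-- Positivity in the ordered field `K`: positive leading coefficient. -/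
def Kpos (x : K) : Prop := 0 < x.coeff x.order

theorem deg_mem_positive_sectors {d : ℕ} [NeZero d] (f : Fin d → K)
    (hf : ∀ i, f i ≠ 0)
    (hP : (Finset.univ.filter fun i => Kpos (f i)).Nonempty)
    (hN : (Finset.univ.filter fun i => Kpos (-(f i))).Nonempty)
    (X : Fin d → K) (hX : ∀ i, Kpos (X i))
    (hsum : Kpos (∑ i, f i * X i) ∨ (∑ i, f i * X i) = 0) :
    (Finset.univ.filter fun i => Kpos (f i)).sup' hP
        (fun i => deg (X i) + deg (f i)) =
      Finset.univ.sup' Finset.univ_nonempty (fun i => deg (X i) + deg (f i)) := by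
  have hXne : ∀ i, X i ≠ 0 := by
    intro i h
    have := hX i
    rw [h] at this
    simp [Kpos] at this
  set M : ℝ := Finset.univ.sup' Finset.univ_nonempty (fun i => deg (X i) + deg (f i)) with hM
  apply le_antisymm
  · exact Finset.sup'_le _ _ fun i _ =>
      Finset.le_sup' (fun i => deg (X i) + deg (f i)) (Finset.mem_univ i)
  by_contra hlt
  push_neg at hlt
  -- coeff of each term at -M
  have hdeg : ∀ i, (f i * X i).order = -(deg (X i) + deg (f i)) := by
    intro i
    unfold deg
    rw [HahnSeries.order_mul (hf i) (hXne i)]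
    ring
  have hterm : ∀ i, deg (X i) + deg (f i) = M →
      (f i * X i).coeff (-M) = (f i).coeff (f i).order * (X i).coeff (X i).order := by
    intro i hi
    have h1 : (f i).order + (X i).order = -M := by
      have h2 := hdeg i
      rw [hi, HahnSeries.order_mul (hf i) (hXne i)] at h2
      linarith
    rw [← h1, HahnSeries.coeff_mul_order_add_order (f i) (X i),
      HahnSeries.leadingCoeff_eq, HahnSeries.leadingCoeff_eq]
  have hterm0 : ∀ i, deg (X i) + deg (f i) < M → (f i * X i).coeff (-M) = 0 := by
    intro i hi
    apply HahnSeries.coeff_eq_zero_of_lt_order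
    rw [hdeg i]
    linarith
  have hle : ∀ i, deg (X i) + deg (f i) ≤ M := fun i =>
    Finset.le_sup' (fun i => deg (X i) + deg (f i)) (Finset.mem_univ i)
  -- any i attaining M has f i negative leading coeff
  have hneg : ∀ i, deg (X i) + deg (f i) = M → (f i).coeff (f i).order < 0 := by
    intro i hi
    rcases lt_trichotomy ((f i).coeff (f i).order) 0 with h | h | h
    · exact h
    · exact absurd h (HahnSeries.coeff_order_eq_zero.not.2 (hf i))
    · have hiP : i ∈ Finset.univ.filter fun i => Kpos (f i) := by
        exact Finset.mem_filter.mpr ⟨Finset.mem_univ _, h⟩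
      have h3 := Finset.le_sup' (fun i => deg (X i) + deg (f i)) hiP
      rw [hi] at h3
      exact absurd (lt_of_le_of_lt h3 hlt) (lt_irrefl M)
  -- the coefficient of the sum at -M is negative
  set s : K := ∑ i, f i * X i with hs
  have hcoeff : ∀ g : ℝ, s.coeff g = ∑ i, (f i * X i).coeff g := by
    intro g
    exact map_sum (HahnSeries.coeff.addMonoidHom g) _ _
  obtain ⟨i0, _, hi0⟩ := Finset.exists_mem_eq_sup' (Finset.univ_nonempty)
    (fun i => deg (X i) + deg (f i))
  have hscoeff : s.coeff (-M) < 0 := by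
    rw [hcoeff]
    have hnonpos : ∀ i ∈ Finset.univ, (f i * X i).coeff (-M) ≤ 0 := by
      intro i _
      rcases lt_or_eq_of_le (hle i) with h | h
      · rw [hterm0 i h]
      · rw [hterm i h]
        exact le_of_lt (mul_neg_of_neg_of_pos (hneg i h) (hX i))
    have hi0neg : (f i0 * X i0).coeff (-M) < 0 := by
      rw [hterm i0 hi0.symm]
      exact mul_neg_of_neg_of_pos (hneg i0 hi0.symm) (hX i0)
    have hsplit := Finset.add_sum_erase Finset.univ
      (fun i => (f i * X i).coeff (-M)) (Finset.mem_univ i0)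
    have hrest : ∑ i ∈ Finset.univ.erase i0, (f i * X i).coeff (-M) ≤ 0 :=
      Finset.sum_nonpos fun i _ => hnonpos i (Finset.mem_univ i)
    have := hsplit ▸ add_nonpos (le_of_lt hi0neg) hrest
    rcases lt_or_eq_of_le this with h | h
    · exact h
    · exfalso
      have h0 : ∑ i ∈ Finset.univ.erase i0, (f i * X i).coeff (-M) =
          - (f i0 * X i0).coeff (-M) := by linarith [hsplit.symm ▸ h.symm]
      linarith [hsplit, h.symm]
  have hsne : s ≠ 0 := fun h => by rw [h] at hscoeff; simp at hscoeff
  have horder : s.order = -M := by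
    have h1 : s.order ≤ -M := HahnSeries.order_le_of_coeff_ne_zero (ne_of_lt hscoeff)
    rcases lt_or_eq_of_le h1 with h | h
    · exfalso
      have hc := HahnSeries.coeff_order_eq_zero.not.2 hsne
      apply hc
      rw [hcoeff]
      apply Finset.sum_eq_zero
      intro i _
      apply HahnSeries.coeff_eq_zero_of_lt_order
      rw [hdeg i]
      have := hle i
      linarith
    · exact h
  rcases hsum with h | h
  · unfold Kpos at h
    rw [horder] at h
    linarith
  · exact hsne (hs ▸ h)
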